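/- Following the dynamic oracle produces the optimal tree: if c is a valid configuration and c = c_0 ⊢_{τ_1} c_1 ⊢_{τ_2} ⋯ ⊢_{τ_m} c_m is any sequence of transitions with τ_k ∈ dyna(c_{k−1}) for every k and with c_m final, then the bracket set of c_m equals t*(c). -/

import Mathlib

/-!
Formalization of the span-based Structure/Label transition parsing system of
Cross & Huang (2016), "Span-Based Constituency Parsing with a Structure-Label
System and Provably Optimal Dynamic Oracles".

A configuration is `(z, σ, t)` where `z` is the step number, `σ` the stack of
span boundaries and `t` the set of brackets built so far.  A bracket is a
triple `(X, i, j)` with `X` a nonterminal label and `i < j ≤ n` a span.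
-/

namespace SpanParser

structure Config (N : Type*) where
  z : ℕ
  σ : List ℕ
  t : Finset (N × ℕ × ℕ)

variable {N : Type*}

/-- The span of a bracket. -/
def span (b : N × ℕ × ℕ) : ℕ × ℕ := b.2

/-- Top (rightmost) boundary of the stack. -/
def topJ (σ : List ℕ) : ℕ := σ.getLastD 0

/-- Second-to-top boundary of the stack. -/
def topI (σ : List ℕ) : ℕ := σ.dropLast.getLastD 0

/-- Parser actions: shift, combine, label-`X`, and nolabel. -/
inductive Action (N : Type*) where
  | sh : Action N
  | comb : Action N
  | label : N → Action N
  | nolabel : Action N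

variable [DecidableEq N]

/-- Applicability of an action at a configuration (for sentence length `n`). -/
def App (n : ℕ) (c : Config N) : Action N → Prop
  | .sh      => Even c.z ∧ c.σ ≠ [] ∧ topJ c.σ < n
  | .comb    => Even c.z ∧ 3 ≤ c.σ.length
  | .label _ => Odd c.z ∧ 2 ≤ c.σ.length
  | .nolabel => Odd c.z ∧ 2 ≤ c.σ.length ∧ c.z < 4 * n - 1

/-- The result `τ(c)` of applying action `τ` to configuration `c`. -/
def doAct (c : Config N) : Action N → Config N
  | .sh      => ⟨c.z + 1, c.σ ++ [topJ c.σ + 1], c.t⟩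
  | .comb    => ⟨c.z + 1, c.σ.dropLast.dropLast ++ [topJ c.σ], c.t⟩
  | .label X => ⟨c.z + 1, c.σ, insert (X, topI c.σ, topJ c.σ) c.t⟩
  | .nolabel => ⟨c.z + 1, c.σ, c.t⟩

/-- The initial configuration `(0, [0], ∅)`. -/
def initial (N : Type*) : Config N := ⟨0, [0], ∅⟩

/-- One transition step `c ⊢ c'`. -/
def Step (n : ℕ) (c c' : Config N) : Prop := ∃ a, App n c a ∧ c' = doAct c a

/-- `⊢*`: reflexive-transitive closure of the transition relation. -/
def Reaches (n : ℕ) : Config N → Config N → Prop := Relation.ReflTransGen (Step n)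

/-- A configuration is valid if it is reachable from the initial configuration. -/
def Valid (n : ℕ) (c : Config N) : Prop := Reaches n (initial N) c

/-- A final configuration: `σ = [0, n]` and `z = 4n - 2`. -/
def Final (n : ℕ) (c : Config N) : Prop := c.σ = [0, n] ∧ c.z = 4 * n - 2

/-- `D(c)`: the set of trees of final configurations reachable from `c`. -/
def Dset (n : ℕ) (c : Config N) : Set (Finset (N × ℕ × ℕ)) :=
  {t' | ∃ c', Reaches n c c' ∧ Final n c' ∧ c'.t = t'}

/-- `(i,j) ⪯ (p,q)`: span `(i,j)` is encompassed by `(p,q)`, i.e. `p ≤ i < j ≤ q`. -/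
def Enc (s₁ s₂ : ℕ × ℕ) : Prop := s₂.1 ≤ s₁.1 ∧ s₁.1 < s₁.2 ∧ s₁.2 ≤ s₂.2

/-- `(i,j) ≺ (p,q)`: strict encompassment. -/
def SEnc (s₁ s₂ : ℕ × ℕ) : Prop := Enc s₁ s₂ ∧ s₁ ≠ s₂

/-- `tG` is a gold tree for sentence length `n`: valid spans, pairwise-distinct
spans, pairwise non-crossing spans, and exactly one bracket with span `(0, n)`
(uniqueness follows from distinctness of spans). -/
structure IsGold (n : ℕ) (tG : Finset (N × ℕ × ℕ)) : Prop where
  validSpans : ∀ b ∈ tG, (span b).1 < (span b).2 ∧ (span b).2 ≤ n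
  distinctSpans : ∀ b₁ ∈ tG, ∀ b₂ ∈ tG, span b₁ = span b₂ → b₁ = b₂
  noncrossing : ∀ b₁ ∈ tG, ∀ b₂ ∈ tG,
    Enc (span b₁) (span b₂) ∨ Enc (span b₂) (span b₁) ∨
    (span b₁).2 ≤ (span b₂).1 ∨ (span b₂).2 ≤ (span b₁).1
  root : ∃ X, (X, 0, n) ∈ tG

open Classical in
/-- `left(c)`: gold brackets (strictly, at even steps) encompassing the top
span whose left boundary occurs on the stack. -/
noncomputable def leftSet (tG : Finset (N × ℕ × ℕ)) (c : Config N) :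
    Finset (N × ℕ × ℕ) :=
  tG.filter fun b =>
    (if Even c.z then SEnc (topI c.σ, topJ c.σ) (span b)
     else Enc (topI c.σ, topJ c.σ) (span b)) ∧ (span b).1 ∈ c.σ

open Classical in
/-- `right(c)`: gold brackets entirely on the queue. -/
noncomputable def rightSet (tG : Finset (N × ℕ × ℕ)) (c : Config N) :
    Finset (N × ℕ × ℕ) :=
  tG.filter fun b => topJ c.σ ≤ (span b).1

open Classical in
/-- `reach(c)`: the reachable gold brackets (all of `t_G` at the initial
configuration, whose stack has fewer than two boundaries). -/
noncomputable def reach (tG : Finset (N × ℕ × ℕ)) (c : Config N) :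
    Finset (N × ℕ × ℕ) :=
  if c.σ.length < 2 then tG else leftSet tG c ∪ rightSet tG c

/-- The optimal tree `t*(c) = t ∪ reach(c)`. -/
noncomputable def tstar (tG : Finset (N × ℕ × ℕ)) (c : Config N) :
    Finset (N × ℕ × ℕ) :=
  c.t ∪ reach tG c

/-- `b = next(c)`: the `≺`-minimal element of `left(c)`. -/
def IsNext (tG : Finset (N × ℕ × ℕ)) (c : Config N) (b : N × ℕ × ℕ) : Prop :=
  b ∈ leftSet tG c ∧ ∀ b' ∈ leftSet tG c, Enc (span b) (span b')

/-- The dynamic-oracle policy `dyna(c)` as a predicate on actions. -/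
def Dyna (tG : Finset (N × ℕ × ℕ)) (c : Config N) (a : Action N) : Prop :=
  if c.σ.length < 2 then a = Action.sh
  else if Even c.z then
    ∃ b, IsNext tG c b ∧
      (((span b).1 = topI c.σ ∧ topJ c.σ < (span b).2 ∧ a = Action.sh) ∨
       ((span b).1 < topI c.σ ∧ (span b).2 = topJ c.σ ∧ a = Action.comb) ∨
       ((span b).1 < topI c.σ ∧ topJ c.σ < (span b).2 ∧
          (a = Action.sh ∨ a = Action.comb)))
  else
    (∃ X, (X, topI c.σ, topJ c.σ) ∈ tG ∧ a = Action.label X) ∨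
    ((∀ X, (X, topI c.σ, topJ c.σ) ∉ tG) ∧ a = Action.nolabel)

/-- `F1` of a predicted bracket set `t'` against the gold tree `tG`
(`0` when `t' ∩ tG = ∅`). -/
noncomputable def f1 (tG t' : Finset (N × ℕ × ℕ)) : ℝ :=
  if t' ∩ tG = ∅ then 0
  else
    (2 * (((t' ∩ tG).card : ℝ) / (tG.card : ℝ)) * (((t' ∩ tG).card : ℝ) / (t'.card : ℝ))) /
      ((((t' ∩ tG).card : ℝ) / (tG.card : ℝ)) + (((t' ∩ tG).card : ℝ) / (t'.card : ℝ)))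

/-- `F1(c)`: the best `F1` among trees reachable from `c`. -/
noncomputable def configF1 (n : ℕ) (tG : Finset (N × ℕ × ℕ)) (c : Config N) : ℝ :=
  sSup (f1 tG '' Dset n c)

/-- A run of (applicable) actions from one configuration to another. -/
inductive Run (n : ℕ) : Config N → List (Action N) → Config N → Prop
  | refl (c : Config N) : Run n c [] c
  | step {c c' : Config N} {as : List (Action N)} (a : Action N)
      (happ : App n c a) (h : Run n (doAct c a) as c') : Run n c (a :: as) c'

/-- A run all of whose actions follow the dynamic oracle. -/
inductive DynaRun (n : ℕ) (tG : Finset (N × ℕ × ℕ)) : Config N → Config N → Prop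
  | refl (c : Config N) : DynaRun n tG c c
  | step {c c' : Config N} (a : Action N) (happ : App n c a) (hdyna : Dyna tG c a)
      (h : DynaRun n tG (doAct c a) c') : DynaRun n tG c c'

def isSh : Action N → Bool
  | .sh => true
  | _ => false

def isComb : Action N → Bool
  | .comb => true
  | _ => false

/-- Label-step actions: `label-X` or `nolabel`. -/
def isLabelStep : Action N → Bool
  | .label _ => true
  | .nolabel => true
  | _ => false


/-! ### Auxiliary development for the dynamic-oracle optimality proof -/

section OracleProof

variable {n : ℕ} {tG : Finset (N × ℕ × ℕ)}

/-- The invariant maintained by valid configurations (the part we need). -/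
def Inv (c : Config N) : Prop :=
  List.Pairwise (· < ·) c.σ ∧ (2 ≤ c.σ.length ∨ c = initial N)

lemma exists_concat {l : List ℕ} (h : l ≠ []) : ∃ l' a, l = l' ++ [a] :=
  ((List.eq_nil_or_concat l).resolve_left h).imp fun _ h => h.imp fun _ h => by simpa using h

lemma exists_two {σ : List ℕ} (h : 2 ≤ σ.length) : ∃ l i j, σ = l ++ [i, j] := by
  rcases hr : σ.reverse with _ | ⟨j, _ | ⟨i, l⟩⟩
  · have : σ.length = 0 := by simpa using congrArg List.length hr
    omega
  · have : σ.length = 1 := by simpa using congrArg List.length hr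
    omega
  · exact ⟨l.reverse, i, j, by rw [← σ.reverse_reverse, hr]; simp⟩

lemma topJ_concat (l : List ℕ) (a : ℕ) : topJ (l ++ [a]) = a := by simp [topJ]

lemma topJ_concat2 (l : List ℕ) (a b : ℕ) : topJ (l ++ [a, b]) = b := by simp [topJ]

lemma topI_concat2 (l : List ℕ) (a b : ℕ) : topI (l ++ [a, b]) = a := by simp [topI, topJ]

lemma sorted2 {l : List ℕ} {i j : ℕ} (h : List.Pairwise (· < ·) (l ++ [i, j])) :
    i < j ∧ ∀ x ∈ l, x < i := by
  rw [List.pairwise_append] at h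
  exact ⟨List.rel_of_pairwise_cons h.2.1 (by simp), fun x hx => h.2.2 x hx i (by simp)⟩

lemma le_topJ {σ : List ℕ} (h : List.Pairwise (· < ·) σ) (hne : σ ≠ []) {x : ℕ}
    (hx : x ∈ σ) : x ≤ topJ σ := by
  obtain ⟨l', a, rfl⟩ := exists_concat hne
  rw [List.pairwise_append] at h
  rw [topJ_concat]
  rcases List.mem_append.1 hx with h1 | h1
  · exact le_of_lt (h.2.2 x h1 a (by simp))
  · simp at h1; omega

/-- Unfolded membership in `reach` at an even step. -/
lemma mem_reach_even {c : Config N} (hz : Even c.z) (h2 : 2 ≤ c.σ.length)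
    (Y : N) (p q : ℕ) :
    (Y, p, q) ∈ reach tG c ↔ (Y, p, q) ∈ tG ∧
      ((p ≤ topI c.σ ∧ topI c.σ < topJ c.σ ∧ topJ c.σ ≤ q ∧
          ¬(p = topI c.σ ∧ q = topJ c.σ) ∧ p ∈ c.σ) ∨ topJ c.σ ≤ p) := by
  classical
  rw [reach, if_neg (by omega)]
  rw [Finset.mem_union, rightSet, Finset.mem_filter]
  simp only [Finset.mem_union, leftSet, rightSet, Finset.mem_filter, if_pos hz,
    SEnc, Enc, span, ne_eq, Prod.mk.injEq]
  constructor
  · rintro (⟨h1, ⟨⟨a1, a2, a3⟩, a4⟩, a5⟩ | ⟨h1, h2⟩)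
    · exact ⟨h1, Or.inl ⟨a1, a2, a3, fun ⟨e1, e2⟩ => a4 ⟨e1.symm, e2.symm⟩, a5⟩⟩
    · exact ⟨h1, Or.inr h2⟩
  · rintro ⟨h1, ⟨a1, a2, a3, a4, a5⟩ | h2⟩
    · exact Or.inl ⟨h1, ⟨⟨a1, a2, a3⟩, fun ⟨e1, e2⟩ => a4 ⟨e1.symm, e2.symm⟩⟩, a5⟩
    · exact Or.inr ⟨h1, h2⟩

/-- Unfolded membership in `reach` at an odd step. -/
lemma mem_reach_odd {c : Config N} (hz : ¬ Even c.z) (h2 : 2 ≤ c.σ.length)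
    (Y : N) (p q : ℕ) :
    (Y, p, q) ∈ reach tG c ↔ (Y, p, q) ∈ tG ∧
      ((p ≤ topI c.σ ∧ topI c.σ < topJ c.σ ∧ topJ c.σ ≤ q ∧ p ∈ c.σ) ∨
        topJ c.σ ≤ p) := by
  classical
  rw [reach, if_neg (by omega)]
  rw [Finset.mem_union, rightSet, Finset.mem_filter]
  simp only [Finset.mem_union, leftSet, rightSet, Finset.mem_filter, if_neg hz,
    Enc, span]
  tauto

lemma mem_leftSet_even {c : Config N} (hz : Even c.z) (Y : N) (p q : ℕ) :
    (Y, p, q) ∈ leftSet tG c ↔ (Y, p, q) ∈ tG ∧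
      (p ≤ topI c.σ ∧ topI c.σ < topJ c.σ ∧ topJ c.σ ≤ q ∧
        ¬(p = topI c.σ ∧ q = topJ c.σ)) ∧ p ∈ c.σ := by
  classical
  simp only [leftSet, Finset.mem_filter, if_pos hz, SEnc, Enc, span, ne_eq,
    Prod.mk.injEq]
  constructor
  · rintro ⟨h1, ⟨⟨a1, a2, a3⟩, a4⟩, a5⟩
    exact ⟨h1, ⟨a1, a2, a3, fun ⟨e1, e2⟩ => a4 ⟨e1.symm, e2.symm⟩⟩, a5⟩
  · rintro ⟨h1, ⟨a1, a2, a3, a4⟩, a5⟩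
    exact ⟨h1, ⟨⟨a1, a2, a3⟩, fun ⟨e1, e2⟩ => a4 ⟨e1.symm, e2.symm⟩⟩, a5⟩

lemma isNext_enc {c : Config N} {b : N × ℕ × ℕ} (hnext : IsNext tG c b)
    (hz : Even c.z) {Y : N} {p q : ℕ} (h1 : (Y, p, q) ∈ tG)
    (h2 : p ≤ topI c.σ ∧ topI c.σ < topJ c.σ ∧ topJ c.σ ≤ q ∧
      ¬(p = topI c.σ ∧ q = topJ c.σ)) (h3 : p ∈ c.σ) :
    p ≤ (span b).1 ∧ (span b).2 ≤ q := by
  have hm : (Y, p, q) ∈ leftSet tG c := (mem_leftSet_even hz Y p q).2 ⟨h1, h2, h3⟩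
  have := hnext.2 _ hm
  exact ⟨this.1, this.2.2⟩

/-- Shifting at an even step (when `next(c)` extends past `j`) preserves `reach`. -/
lemma reach_even_sh (hG : IsGold n tG) {c : Config N} {l : List ℕ} {i j : ℕ}
    (hσ : c.σ = l ++ [i, j]) (hsort : List.Pairwise (· < ·) c.σ) (hz : Even c.z)
    {b : N × ℕ × ℕ} (hnext : IsNext tG c b) (hbq : j < (span b).2) :
    reach tG (doAct c Action.sh) = reach tG c := by
  obtain ⟨hij, hl⟩ := sorted2 (hσ ▸ hsort)
  have hI : topI c.σ = i := by rw [hσ, topI_concat2]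
  have hJ : topJ c.σ = j := by rw [hσ, topJ_concat2]
  set c₁ := doAct c Action.sh with hc₁
  have hσ' : c₁.σ = (l ++ [i, j]) ++ [j + 1] := by
    simp only [hc₁, doAct, hσ]
    rw [topJ_concat2]
  have hz' : ¬ Even c₁.z := by simp [hc₁, doAct, Nat.even_add_one, hz]
  have hI' : topI c₁.σ = j := by
    rw [hσ', topI]; rw [List.dropLast_concat]; exact (topJ_concat2 l i j)
  have hJ' : topJ c₁.σ = j + 1 := by rw [hσ', topJ_concat]
  ext b'
  obtain ⟨Y, p, q⟩ := b'
  rw [mem_reach_odd hz' (by rw [hσ']; simp), mem_reach_even hz (by rw [hσ]; simp),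
    hI, hJ, hI', hJ']
  constructor
  · rintro ⟨htG, hc⟩
    refine ⟨htG, ?_⟩
    rcases hc with ⟨hp, _, hq, hmem⟩ | hr
    · rw [hσ'] at hmem
      simp only [List.mem_append, List.mem_singleton, List.mem_cons,
        List.not_mem_nil, or_false] at hmem
      rcases hmem with (hpl | hpi | hpj) | hpj1
      · have hpi' : p < i := hl p hpl
        left
        exact ⟨by omega, hij, by omega, by omega, by rw [hσ]; simp [hpl]⟩
      · by_cases hji : j ≤ p
        · exact Or.inr hji
        · left
          exact ⟨by omega, hij, by omega, by omega, by rw [hσ]; simp [hpi]⟩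
      · exact Or.inr (by omega)
      · omega
    · exact Or.inr (by omega)
  · rintro ⟨htG, hc⟩
    refine ⟨htG, ?_⟩
    rcases hc with ⟨hp, hij', hq, hne, hmem⟩ | hr
    · -- a gold bracket in `left(c)`; by minimality of `next(c)` its right end exceeds `j`
      have henc := isNext_enc hnext hz htG (by rw [hI, hJ]; exact ⟨hp, hij', hq, hne⟩)
        hmem
      left
      refine ⟨by omega, by omega, by omega, by rw [hσ']; rw [hσ] at hmem; simp [List.mem_append] at hmem ⊢; tauto⟩
    · by_cases h1 : j + 1 ≤ p
      · exact Or.inr h1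
      · have hpj : p = j := by omega
        have hv := hG.validSpans _ htG
        simp only [span] at hv
        left
        exact ⟨by omega, by omega, by omega, by rw [hσ']; simp [hpj]⟩

/-- Combining at an even step (when `next(c)` starts before `i`) preserves `reach`. -/
lemma reach_even_comb (hG : IsGold n tG) {c : Config N} {l : List ℕ} {i' i j : ℕ}
    (hσ : c.σ = l ++ [i', i, j]) (hsort : List.Pairwise (· < ·) c.σ) (hz : Even c.z)
    {b : N × ℕ × ℕ} (hnext : IsNext tG c b) (hbp : (span b).1 < i) :
    reach tG (doAct c Action.comb) = reach tG c := by
  have hσ2 : c.σ = (l ++ [i']) ++ [i, j] := by rw [hσ]; simp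
  obtain ⟨hij, hl2⟩ := sorted2 (hσ2 ▸ hsort)
  have hi'i : i' < i := hl2 i' (by simp)
  have hli' : ∀ x ∈ l, x < i' := by
    have hσ3 : c.σ = l ++ [i', i, j] := hσ
    have h' := hσ3 ▸ hsort
    rw [List.pairwise_append] at h'
    exact fun x hx => h'.2.2 x hx i' (by simp)
  have hI : topI c.σ = i := by rw [hσ2, topI_concat2]
  have hJ : topJ c.σ = j := by rw [hσ2, topJ_concat2]
  set c₁ := doAct c Action.comb with hc₁
  have hJ3 : topJ (l ++ [i', i, j]) = j := by
    have h : l ++ [i', i, j] = (l ++ [i']) ++ [i, j] := by simp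
    rw [h, topJ_concat2]
  have hσ' : c₁.σ = (l ++ [i']) ++ [j] := by
    simp only [hc₁, doAct, hσ, hJ3]
    simp
  have hz' : ¬ Even c₁.z := by simp [hc₁, doAct, Nat.even_add_one, hz]
  have hI' : topI c₁.σ = i' := by
    rw [hσ', topI, List.dropLast_concat]
    exact topJ_concat l i'
  have hJ' : topJ c₁.σ = j := by rw [hσ', topJ_concat]
  ext b'
  obtain ⟨Y, p, q⟩ := b'
  rw [mem_reach_odd hz' (by rw [hσ']; simp), mem_reach_even hz (by rw [hσ]; simp),
    hI, hJ, hI', hJ']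
  constructor
  · rintro ⟨htG, hc⟩
    refine ⟨htG, ?_⟩
    rcases hc with ⟨hp, hi'j, hq, hmem⟩ | hr
    · left
      refine ⟨by omega, hij, hq, by omega, ?_⟩
      rw [hσ]; rw [hσ'] at hmem
      simp [List.mem_append] at hmem ⊢; tauto
    · exact Or.inr hr
  · rintro ⟨htG, hc⟩
    refine ⟨htG, ?_⟩
    rcases hc with ⟨hp, hij', hq, hne, hmem⟩ | hr
    · have henc := isNext_enc hnext hz htG (by rw [hI, hJ]; exact ⟨hp, hij', hq, hne⟩)
        hmem
      have hpi : p < i := by omega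
      left
      refine ⟨?_, by omega, hq, ?_⟩
      · -- p ∈ σ and p < i implies p ≤ i'
        rw [hσ] at hmem
        simp only [List.mem_append, List.mem_cons, List.mem_singleton,
          List.not_mem_nil, or_false] at hmem
        rcases hmem with hpl | hpi' | hpi'' | hpj
        · exact le_of_lt (hli' p hpl)
        · omega
        · omega
        · omega
      · rw [hσ'] ; rw [hσ] at hmem
        simp only [List.mem_append, List.mem_cons, List.mem_singleton,
          List.not_mem_nil, or_false] at hmem ⊢
        have : p ≠ i := by omega
        have : p ≠ j := by omega
        tauto
    · exact Or.inr hr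

/-- Labeling at an odd step (when the top span is gold) preserves `t*`. -/
lemma tstar_odd_label (hG : IsGold n tG) {c : Config N} {l : List ℕ} {i j : ℕ} {X : N}
    (hσ : c.σ = l ++ [i, j]) (hz : ¬ Even c.z) (hX : (X, i, j) ∈ tG) :
    tstar tG (doAct c (Action.label X)) = tstar tG c := by
  have hI : topI c.σ = i := by rw [hσ, topI_concat2]
  have hJ : topJ c.σ = j := by rw [hσ, topJ_concat2]
  set c₁ := doAct c (Action.label X) with hc₁
  have hσ' : c₁.σ = c.σ := rfl
  have hz' : Even c₁.z := by
    simp only [hc₁, doAct, Nat.even_add_one]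
    exact fun h => hz (by simpa using h)
  have ht' : c₁.t = insert (X, i, j) c.t := by
    simp only [hc₁, doAct, hI, hJ]
  have hij : i < j := (hG.validSpans _ hX).1
  have key : reach tG c = insert (X, i, j) (reach tG c₁) := by
    ext b'
    obtain ⟨Y, p, q⟩ := b'
    rw [Finset.mem_insert,
      mem_reach_odd hz (by rw [hσ]; simp),
      mem_reach_even hz' (by rw [hσ', hσ]; simp), hσ', hI, hJ]
    constructor
    · rintro ⟨htG, hc⟩
      rcases hc with ⟨hp, hij', hq, hmem⟩ | hr
      · by_cases hsp : p = i ∧ q = j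
        · left
          have : span (Y, p, q) = span (X, i, j) := by
            simp [span, hsp.1, hsp.2]
          exact hG.distinctSpans _ htG _ hX this
        · right
          exact ⟨htG, Or.inl ⟨hp, hij', hq, fun h => hsp ⟨by omega, by omega⟩, hmem⟩⟩
      · exact Or.inr ⟨htG, Or.inr hr⟩
    · rintro (heq | ⟨htG, hc⟩)
      · obtain ⟨h1, h2, h3⟩ : Y = X ∧ p = i ∧ q = j := by
          injection heq with h1 h2; injection h2 with h2 h3; exact ⟨h1, h2, h3⟩
        refine ⟨by rw [h1, h2, h3]; exact hX, Or.inl ⟨h2.le, hij, h3.ge, ?_⟩⟩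
        rw [hσ, h2]; simp
      · rcases hc with ⟨hp, hij', hq, _, hmem⟩ | hr
        · exact ⟨htG, Or.inl ⟨hp, hij', hq, hmem⟩⟩
        · exact ⟨htG, Or.inr hr⟩
  rw [tstar, tstar, key, ht', Finset.insert_union, Finset.union_insert]

/-- The no-label action at an odd step (when the top span is not gold) preserves `t*`. -/
lemma tstar_odd_nolabel (hG : IsGold n tG) {c : Config N} {l : List ℕ} {i j : ℕ}
    (hσ : c.σ = l ++ [i, j]) (hz : ¬ Even c.z) (hX : ∀ X, (X, i, j) ∉ tG) :
    tstar tG (doAct c Action.nolabel) = tstar tG c := by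
  have hI : topI c.σ = i := by rw [hσ, topI_concat2]
  have hJ : topJ c.σ = j := by rw [hσ, topJ_concat2]
  set c₁ := doAct c Action.nolabel with hc₁
  have hσ' : c₁.σ = c.σ := rfl
  have hz' : Even c₁.z := by
    simp only [hc₁, doAct, Nat.even_add_one]
    exact fun h => hz (by simpa using h)
  have key : reach tG c = reach tG c₁ := by
    ext b'
    obtain ⟨Y, p, q⟩ := b'
    rw [mem_reach_odd hz (by rw [hσ]; simp),
      mem_reach_even hz' (by rw [hσ', hσ]; simp), hσ', hI, hJ]
    constructor
    · rintro ⟨htG, hc⟩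
      refine ⟨htG, ?_⟩
      rcases hc with ⟨hp, hij', hq, hmem⟩ | hr
      · by_cases hsp : p = i ∧ q = j
        · exact absurd (hsp.1 ▸ hsp.2 ▸ htG) (hX Y)
        · exact Or.inl ⟨hp, hij', hq, fun h => hsp ⟨by omega, by omega⟩, hmem⟩
      · exact Or.inr hr
    · rintro ⟨htG, hc⟩
      refine ⟨htG, ?_⟩
      rcases hc with ⟨hp, hij', hq, _, hmem⟩ | hr
      · exact Or.inl ⟨hp, hij', hq, hmem⟩
      · exact Or.inr hr
  rw [tstar, tstar, key]
  rfl

/-- The initial shift preserves `t*`. -/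
lemma tstar_initial_sh (hn : 1 ≤ n) (hG : IsGold n tG) :
    tstar tG (doAct (initial N) Action.sh) = tstar tG (initial N) := by
  have h0 : tstar tG (initial N) = tG := by
    simp [tstar, initial, reach]
  rw [h0]
  set c₁ := doAct (initial N) Action.sh with hc₁
  have hσ' : c₁.σ = [] ++ [0, 1] := by
    simp [hc₁, doAct, initial, topJ]
  have hz' : ¬ Even c₁.z := by simp [hc₁, doAct, initial]
  have hI' : topI c₁.σ = 0 := by rw [hσ', topI_concat2]
  have hJ' : topJ c₁.σ = 1 := by rw [hσ', topJ_concat2]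
  have ht' : c₁.t = ∅ := rfl
  ext b'
  obtain ⟨Y, p, q⟩ := b'
  rw [tstar, ht', Finset.empty_union,
    mem_reach_odd hz' (by rw [hσ']; simp), hI', hJ']
  constructor
  · rintro ⟨htG, _⟩; exact htG
  · intro htG
    refine ⟨htG, ?_⟩
    have hv := hG.validSpans _ htG
    simp only [span] at hv
    by_cases hp : p = 0
    · exact Or.inl ⟨by omega, by omega, by omega, by rw [hσ']; simp [hp]⟩
    · exact Or.inr (by omega)

/-- At a final configuration `reach` is empty, so `t* = t`. -/
lemma tstar_final (hn : 1 ≤ n) (hG : IsGold n tG) {c : Config N} (hf : Final n c) :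
    tstar tG c = c.t := by
  obtain ⟨hσ, hz⟩ := hf
  have hzE : Even c.z := by rw [hz]; exact ⟨2 * n - 1, by omega⟩
  have hσ2 : c.σ = [] ++ [0, n] := by rw [hσ]; rfl
  have hI : topI c.σ = 0 := by rw [hσ2, topI_concat2]
  have hJ : topJ c.σ = n := by rw [hσ2, topJ_concat2]
  have : reach tG c = ∅ := by
    ext b'
    obtain ⟨Y, p, q⟩ := b'
    simp only [Finset.notMem_empty, iff_false]
    rw [mem_reach_even hzE (by rw [hσ]; simp), hI, hJ]
    rintro ⟨htG, hc⟩
    have hv := hG.validSpans _ htG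
    simp only [span] at hv
    rcases hc with ⟨hp, h0n, hq, hne, _⟩ | hr
    · exact hne ⟨by omega, by omega⟩
    · omega
  rw [tstar, this, Finset.union_empty]

lemma inv_initial : Inv (initial N) := ⟨by simp [initial], Or.inr rfl⟩

lemma inv_step {c : Config N} {a : Action N} (hinv : Inv c) (happ : App n c a) :
    Inv (doAct c a) := by
  obtain ⟨hs, _⟩ := hinv
  cases a with
  | sh =>
    obtain ⟨hz, hne, hlt⟩ := happ
    have hlen : 1 ≤ c.σ.length := List.length_pos_iff.2 hne
    constructor
    · simp only [doAct]
      rw [List.pairwise_append]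
      refine ⟨hs, List.pairwise_singleton _ _, fun x hx y hy => ?_⟩
      simp only [List.mem_singleton] at hy
      have := le_topJ hs hne hx
      omega
    · left; simp only [doAct, List.length_append, List.length_singleton]; omega
  | comb =>
    obtain ⟨hz, h3⟩ := happ
    obtain ⟨l, i', i, j, hσ⟩ : ∃ l a b c₀, c.σ = l ++ [a, b, c₀] := by
      rcases hr : c.σ.reverse with _ | ⟨c₀, _ | ⟨b, _ | ⟨a, l⟩⟩⟩
      · have : c.σ.length = 0 := by simpa using congrArg List.length hr
        omega
      · have : c.σ.length = 1 := by simpa using congrArg List.length hr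
        omega
      · have : c.σ.length = 2 := by simpa using congrArg List.length hr
        omega
      · exact ⟨l.reverse, a, b, c₀, by rw [← c.σ.reverse_reverse, hr]; simp⟩
    have hσ2 : c.σ = (l ++ [i']) ++ [i, j] := by rw [hσ]; simp
    have hJ : topJ c.σ = j := by rw [hσ2, topJ_concat2]
    have hdd : c.σ.dropLast.dropLast = l ++ [i'] := by rw [hσ]; simp
    have hs2 := hσ2 ▸ hs
    rw [List.pairwise_append] at hs2
    constructor
    · simp only [doAct, hdd, hJ]
      rw [List.pairwise_append]
      refine ⟨hs2.1, List.pairwise_singleton _ _, fun x hx y hy => ?_⟩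
      simp only [List.mem_singleton] at hy
      rw [hy]
      exact hs2.2.2 x hx j (by simp)
    · left
      simp only [doAct, hdd, hJ, List.length_append, List.length_singleton]
      omega
  | label X =>
    obtain ⟨hz, h2⟩ := happ
    exact ⟨hs, Or.inl (by simpa [doAct] using h2)⟩
  | nolabel =>
    obtain ⟨hz, h2, _⟩ := happ
    exact ⟨hs, Or.inl (by simpa [doAct] using h2)⟩

lemma valid_inv {c : Config N} (hc : Valid n c) : Inv c := by
  induction hc with
  | refl => exact inv_initial
  | tail _ hstep ih =>
    obtain ⟨a, happ, rfl⟩ := hstep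
    exact inv_step ih happ

/-- Each oracle step preserves the optimal tree. -/
lemma tstar_step (hn : 1 ≤ n) (hG : IsGold n tG) {c : Config N} {a : Action N}
    (hinv : Inv c) (happ : App n c a) (hdyna : Dyna tG c a) :
    tstar tG (doAct c a) = tstar tG c := by
  by_cases h2 : c.σ.length < 2
  · rw [Dyna, if_pos h2] at hdyna
    subst hdyna
    rcases hinv.2 with h | h
    · omega
    · rw [h]; exact tstar_initial_sh hn hG
  · push_neg at h2
    rw [Dyna, if_neg (by omega)] at hdyna
    obtain ⟨l, i, j, hσ⟩ := exists_two h2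
    have hI : topI c.σ = i := by rw [hσ, topI_concat2]
    have hJ : topJ c.σ = j := by rw [hσ, topJ_concat2]
    by_cases hz : Even c.z
    · rw [if_pos hz] at hdyna
      obtain ⟨b, hnext, hcase⟩ := hdyna
      rw [hI, hJ] at hcase
      have tsh : j < (span b).2 → tstar tG (doAct c Action.sh) = tstar tG c := by
        intro hbq
        rw [tstar, tstar, reach_even_sh hG hσ hinv.1 hz hnext hbq]
        rfl
      have tcomb : (span b).1 < i → a = Action.comb →
          tstar tG (doAct c Action.comb) = tstar tG c := by
        intro hbp ha
        subst ha
        obtain ⟨hz', h3⟩ := happ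
        have hlne : l ≠ [] := by
          intro h
          rw [hσ, h] at h3
          simp at h3
        obtain ⟨l', i'', hl⟩ := exists_concat hlne
        have hσ3 : c.σ = l' ++ [i'', i, j] := by rw [hσ, hl]; simp
        rw [tstar, tstar, reach_even_comb hG hσ3 hinv.1 hz hnext hbp]
        rfl
      rcases hcase with ⟨hp, hq, rfl⟩ | ⟨hp, hq, rfl⟩ | ⟨hp, hq, (rfl | rfl)⟩
      · exact tsh hq
      · exact tcomb hp rfl
      · exact tsh hq
      · exact tcomb hp rfl
    · rw [if_neg hz] at hdyna
      rw [hI, hJ] at hdyna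
      rcases hdyna with ⟨X, hX, rfl⟩ | ⟨hX, rfl⟩
      · exact tstar_odd_label hG hσ hz hX
      · exact tstar_odd_nolabel hG hσ hz hX

lemma dynaRun_tstar (hn : 1 ≤ n) (hG : IsGold n tG) {c c' : Config N}
    (hrun : DynaRun n tG c c') : Inv c → Final n c' → c'.t = tstar tG c := by
  induction hrun with
  | refl c => exact fun _ hf => (tstar_final hn hG hf).symm
  | step a happ hdyna h ih =>
    intro hinv hf
    rw [ih (inv_step hinv happ) hf, tstar_step hn hG hinv happ hdyna]

end OracleProof

/-- Following the dynamic oracle produces the optimal tree: any sequence of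
transitions from a valid `c`, each of whose actions is in the dynamic oracle
of the configuration it leaves, that ends at a final configuration produces
exactly the bracket set `t*(c)`. -/
theorem dyna_run_yields_tstar (n : ℕ) (hn : 1 ≤ n) (tG : Finset (N × ℕ × ℕ))
    (hG : IsGold n tG) (c : Config N) (hc : Valid n c)
    (c' : Config N) (hrun : DynaRun n tG c c') (hf : Final n c') :
    c'.t = tstar tG c :=
  dynaRun_tstar hn hG hrun (valid_inv hc) hf

end SpanParser
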